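/- Triangle inequality for homotopic distance: if X is a normal topological space and f, g, h : X → Y are continuous, then D(f,h) ≤ D(f,g) + D(g,h). -/

import Mathlib

open Set unitInterval

section Aux

variable {X Y : Type*} [TopologicalSpace X] [TopologicalSpace Y]

/-- Bump functions subordinate to a finite open cover of a normal space. -/
lemma hDist_exists_bumps [NormalSpace X] {N : ℕ} (U : Fin N → Set X)
    (hU : ∀ i, IsOpen (U i)) (hcov : ∀ x, ∃ i, x ∈ U i) :
    ∃ f : Fin N → C(X, ℝ), (∀ i x, 0 ≤ f i x) ∧ (∀ i x, f i x ≠ 0 → x ∈ U i) ∧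
      (∀ x, ∃ i, f i x ≠ 0) := by
  obtain ⟨v, hvU, hvo, hvc⟩ := exists_iUnion_eq_closure_subset hU
    (fun x => Set.toFinite _) (Set.iUnion_eq_univ_iff.2 hcov)
  have key : ∀ i, ∃ f : C(X, ℝ), EqOn f 0 (U i)ᶜ ∧ EqOn f 1 (closure (v i)) ∧
      ∀ x, f x ∈ Icc (0:ℝ) 1 := fun i =>
    exists_continuous_zero_one_of_isClosed (hU i).isClosed_compl isClosed_closure
      (disjoint_compl_left.mono_right (hvc i))
  choose f h0 h1 h01 using key
  refine ⟨f, fun i x => (h01 i x).1, fun i x hx => ?_, fun x => ?_⟩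
  · by_contra hxu
    exact hx (h0 i hxu)
  · obtain ⟨i, hi⟩ := Set.iUnion_eq_univ_iff.1 hvU x
    refine ⟨i, ?_⟩
    rw [h1 i (subset_closure hi)]
    norm_num

/-- Gluing homotopies on pairwise disjoint open sets. -/
lemma hDist_homotopic_glue {ι : Type*} (f h : C(X, Y)) (W : ι → Set X)
    (hop : ∀ t, IsOpen (W t)) (hdisj : ∀ s t, s ≠ t → W s ∩ W t = ∅)
    (hhom : ∀ t, (f.restrict (W t)).Homotopic (h.restrict (W t))) :
    (f.restrict (⋃ t, W t)).Homotopic (h.restrict (⋃ t, W t)) := by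
  classical
  have H : ∀ t, ContinuousMap.Homotopy (f.restrict (W t)) (h.restrict (W t)) :=
    fun t => (hhom t).some
  set Ω : Set X := ⋃ t, W t with hΩ
  let S : ι → Set (I × ↥Ω) := fun t => {p | (p.2 : X) ∈ W t}
  have hSo : ∀ t, IsOpen (S t) := fun t =>
    (hop t).preimage (continuous_subtype_val.comp continuous_snd)
  let φ : ∀ t, C(↥(S t), Y) := fun t =>
    (H t).toContinuousMap.comp
      ⟨fun q => (q.val.1, ⟨q.val.2.1, q.2⟩),
        (continuous_fst.comp continuous_subtype_val).prodMk
          (((continuous_subtype_val.comp continuous_snd).comp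
            continuous_subtype_val).subtype_mk _)⟩
  have hφ : ∀ s t (p : I × ↥Ω) (hps : p ∈ S s) (hpt : p ∈ S t),
      φ s ⟨p, hps⟩ = φ t ⟨p, hpt⟩ := by
    intro s t p hps hpt
    rcases eq_or_ne s t with rfl | hst
    · rfl
    · exact absurd (show (p.2 : X) ∈ W s ∩ W t from ⟨hps, hpt⟩)
        (by rw [hdisj s t hst]; exact notMem_empty _)
  have hScov : ∀ p : I × ↥Ω, ∃ t, S t ∈ nhds p := by
    intro p
    obtain ⟨t, ht⟩ := Set.mem_iUnion.1 p.2.prop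
    exact ⟨t, (hSo t).mem_nhds ht⟩
  refine ⟨⟨ContinuousMap.liftCover S φ hφ hScov, ?_, ?_⟩⟩
  · intro x
    obtain ⟨t, ht⟩ := Set.mem_iUnion.1 x.prop
    have hmem : ((0 : I), x) ∈ S t := ht
    have h0 := ContinuousMap.liftCover_coe (S := S) (φ := φ) (hφ := hφ) (hS := hScov)
      (i := t) ⟨((0 : I), x), hmem⟩
    exact h0.trans ((H t).map_zero_left ⟨x.1, ht⟩)
  · intro x
    obtain ⟨t, ht⟩ := Set.mem_iUnion.1 x.prop
    have hmem : ((1 : I), x) ∈ S t := ht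
    have h1 := ContinuousMap.liftCover_coe (S := S) (φ := φ) (hφ := hφ) (hS := hScov)
      (i := t) ⟨((1 : I), x), hmem⟩
    exact h1.trans ((H t).map_one_left ⟨x.1, ht⟩)

/-- Homotopies restrict to smaller sets. -/
lemma hDist_homotopic_restrict_mono {A U : Set X} (hAU : A ⊆ U) {f g : C(X, Y)}
    (hfg : (f.restrict U).Homotopic (g.restrict U)) :
    (f.restrict A).Homotopic (g.restrict A) := by
  have hι := ContinuousMap.Homotopic.comp hfg
    (ContinuousMap.Homotopic.refl (⟨Set.inclusion hAU, continuous_inclusion hAU⟩ : C(A, U)))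
  have e1 : (f.restrict U).comp ⟨Set.inclusion hAU, continuous_inclusion hAU⟩ = f.restrict A :=
    ContinuousMap.ext fun x => rfl
  have e2 : (g.restrict U).comp ⟨Set.inclusion hAU, continuous_inclusion hAU⟩ = g.restrict A :=
    ContinuousMap.ext fun x => rfl
  rwa [e1, e2] at hι

/-- Pure combinatorial maximizer lemma. -/
lemma hDist_max_lemma {n m : ℕ} (a : Fin (n+1) → ℝ) (b : Fin (m+1) → ℝ)
    (ha0 : ∀ i, 0 ≤ a i) (hb0 : ∀ j, 0 ≤ b j)
    (ha : ∃ i, a i ≠ 0) (hb : ∃ j, b j ≠ 0) :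
    ∃ p : Fin (n+1) × Fin (m+1), 0 < a p.1 * b p.2 ∧
      ∀ q : Fin (n+1) × Fin (m+1), q ≠ p →
        (p.1 : ℕ) + (p.2 : ℕ) ≤ (q.1 : ℕ) + (q.2 : ℕ) →
        a q.1 * b q.2 < a p.1 * b p.2 := by
  classical
  have hne : (Finset.univ : Finset (Fin (n+1) × Fin (m+1))).Nonempty :=
    ⟨(0, 0), Finset.mem_univ _⟩
  set M := Finset.univ.sup' hne (fun p : Fin (n+1) × Fin (m+1) => a p.1 * b p.2) with hM
  have hle : ∀ p : Fin (n+1) × Fin (m+1), a p.1 * b p.2 ≤ M :=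
    fun p => Finset.le_sup' (fun p : Fin (n+1) × Fin (m+1) => a p.1 * b p.2) (Finset.mem_univ p)
  obtain ⟨i, hi⟩ := ha
  obtain ⟨j, hj⟩ := hb
  have hMpos : 0 < M :=
    lt_of_lt_of_le (mul_pos ((ha0 i).lt_of_ne (Ne.symm hi)) ((hb0 j).lt_of_ne (Ne.symm hj)))
      (hle (i, j))
  set T := Finset.univ.filter (fun p : Fin (n+1) × Fin (m+1) => a p.1 * b p.2 = M) with hT
  have hTne : T.Nonempty := by
    obtain ⟨p, -, hp⟩ := Finset.exists_mem_eq_sup' hne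
      (fun p : Fin (n+1) × Fin (m+1) => a p.1 * b p.2)
    exact ⟨p, by simp [hT, ← hp, hM]⟩
  obtain ⟨p, hpT, hpmax⟩ := Finset.exists_max_image T
    (fun p : Fin (n+1) × Fin (m+1) => (p.1 : ℕ) + (p.2 : ℕ)) hTne
  have hpM : a p.1 * b p.2 = M := by
    have := hpT
    rw [hT, Finset.mem_filter] at this
    exact this.2
  refine ⟨p, by rw [hpM]; exact hMpos, ?_⟩
  intro q hqp hσle
  rcases (hle q).lt_or_eq with hlt | heq
  · rw [hpM]; exact hlt
  · exfalso
    have hqT : q ∈ T := by rw [hT, Finset.mem_filter]; exact ⟨Finset.mem_univ _, heq⟩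
    have hσq := hpmax q hqT
    have hσeq : (q.1 : ℕ) + (q.2 : ℕ) = (p.1 : ℕ) + (p.2 : ℕ) := le_antisymm hσq hσle
    have h1ne : (p.1 : ℕ) ≠ (q.1 : ℕ) := by
      intro h1
      apply hqp
      have h2 : (q.2 : ℕ) = (p.2 : ℕ) := by omega
      exact Prod.ext (Fin.ext h1.symm) (Fin.ext h2)
    have hr1 : a q.1 * b p.2 ≤ M := hle (q.1, p.2)
    have hr2 : a p.1 * b q.2 ≤ M := hle (p.1, q.2)
    have hprod : (a q.1 * b p.2) * (a p.1 * b q.2) = M * M := by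
      rw [show (a q.1 * b p.2) * (a p.1 * b q.2) = (a p.1 * b p.2) * (a q.1 * b q.2) from by
        ring, hpM, heq]
    have hr2pos : 0 < a p.1 * b q.2 := by
      rcases (mul_nonneg (ha0 p.1) (hb0 q.2)).lt_or_eq with hpos | hzero
      · exact hpos
      · exfalso
        rw [← hzero, mul_zero] at hprod
        nlinarith
    have hr1M : a q.1 * b p.2 = M := by
      by_contra hne'
      have hlt' : a q.1 * b p.2 < M := lt_of_le_of_ne hr1 hne'
      nlinarith [mul_lt_mul_of_pos_right hlt' hr2pos, mul_le_mul_of_nonneg_left hr2 hMpos.le]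
    have hr2M : a p.1 * b q.2 = M := by
      rw [hr1M] at hprod
      exact mul_left_cancel₀ hMpos.ne' hprod
    have hT1 : ((q.1, p.2) : Fin (n+1) × Fin (m+1)) ∈ T := by
      rw [hT, Finset.mem_filter]; exact ⟨Finset.mem_univ _, hr1M⟩
    have hT2 : ((p.1, q.2) : Fin (n+1) × Fin (m+1)) ∈ T := by
      rw [hT, Finset.mem_filter]; exact ⟨Finset.mem_univ _, hr2M⟩
    have c1 := hpmax _ hT1
    have c2 := hpmax _ hT2
    simp only at c1 c2
    omega

/-- Core construction for the triangle inequality. -/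
lemma hDist_core [NormalSpace X] (f g h : C(X, Y)) {n m : ℕ}
    (U : Fin (n+1) → Set X) (hUo : ∀ i, IsOpen (U i)) (hUc : ∀ x, ∃ i, x ∈ U i)
    (hUh : ∀ i, (f.restrict (U i)).Homotopic (g.restrict (U i)))
    (V : Fin (m+1) → Set X) (hVo : ∀ j, IsOpen (V j)) (hVc : ∀ x, ∃ j, x ∈ V j)
    (hVh : ∀ j, (g.restrict (V j)).Homotopic (h.restrict (V j))) :
    ∃ Ω : Fin (n+m+1) → Set X, (∀ s, IsOpen (Ω s)) ∧ (∀ x, ∃ s, x ∈ Ω s) ∧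
      ∀ s, (f.restrict (Ω s)).Homotopic (h.restrict (Ω s)) := by
  classical
  obtain ⟨F, hF0, hFU, hFc⟩ := hDist_exists_bumps U hUo hUc
  obtain ⟨G, hG0, hGV, hGc⟩ := hDist_exists_bumps V hVo hVc
  let P := Fin (n+1) × Fin (m+1)
  let W : P → Set X := fun p =>
    {x | 0 < F p.1 x * G p.2 x} ∩
      ⋂ q : P, {x | (q ≠ p ∧ (p.1 : ℕ) + (p.2 : ℕ) ≤ (q.1 : ℕ) + (q.2 : ℕ)) →
        F q.1 x * G q.2 x < F p.1 x * G p.2 x}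
  have hwc : ∀ p : P, Continuous (fun x => F p.1 x * G p.2 x) :=
    fun p => (F p.1).continuous.mul (G p.2).continuous
  have hWo : ∀ p, IsOpen (W p) := by
    intro p
    apply IsOpen.inter
    · exact isOpen_lt continuous_const (hwc p)
    · refine isOpen_iInter_of_finite fun q => ?_
      by_cases hq : q ≠ p ∧ (p.1 : ℕ) + (p.2 : ℕ) ≤ (q.1 : ℕ) + (q.2 : ℕ)
      · have e : {x | (q ≠ p ∧ (p.1 : ℕ) + (p.2 : ℕ) ≤ (q.1 : ℕ) + (q.2 : ℕ)) →
            F q.1 x * G q.2 x < F p.1 x * G p.2 x} = {x | F q.1 x * G q.2 x < F p.1 x * G p.2 x} := by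
          ext x; simp [hq]
        rw [e]
        exact isOpen_lt (hwc q) (hwc p)
      · have e : {x | (q ≠ p ∧ (p.1 : ℕ) + (p.2 : ℕ) ≤ (q.1 : ℕ) + (q.2 : ℕ)) →
            F q.1 x * G q.2 x < F p.1 x * G p.2 x} = Set.univ := by
          ext x; simp [hq]
        rw [e]
        exact isOpen_univ
  have hWsub : ∀ p, W p ⊆ U p.1 ∩ V p.2 := by
    intro p x hx
    have hpos : 0 < F p.1 x * G p.2 x := hx.1
    have hF : F p.1 x ≠ 0 := by
      intro h0
      rw [h0, zero_mul] at hpos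
      exact lt_irrefl _ hpos
    have hG : G p.2 x ≠ 0 := by
      intro h0
      rw [h0, mul_zero] at hpos
      exact lt_irrefl _ hpos
    exact ⟨hFU _ _ hF, hGV _ _ hG⟩
  have hWh : ∀ p, (f.restrict (W p)).Homotopic (h.restrict (W p)) := fun p =>
    (hDist_homotopic_restrict_mono (fun x hx => (hWsub p hx).1) (hUh p.1)).trans
      (hDist_homotopic_restrict_mono (fun x hx => (hWsub p hx).2) (hVh p.2))
  have hWdisj : ∀ p q : P, p ≠ q → (p.1 : ℕ) + (p.2 : ℕ) = (q.1 : ℕ) + (q.2 : ℕ) →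
      W p ∩ W q = ∅ := by
    intro p q hpq hσeq
    ext x
    simp only [mem_inter_iff, mem_empty_iff_false, iff_false, not_and]
    intro hxp hxq
    have h1 : F q.1 x * G q.2 x < F p.1 x * G p.2 x := by
      have h' := hxp.2
      rw [Set.mem_iInter] at h'
      exact h' q ⟨Ne.symm hpq, hσeq.le⟩
    have h2 : F p.1 x * G p.2 x < F q.1 x * G q.2 x := by
      have h' := hxq.2
      rw [Set.mem_iInter] at h'
      exact h' p ⟨hpq, hσeq.ge⟩
    exact absurd h1 (not_lt.2 h2.le)
  have hWcov : ∀ x, ∃ p, x ∈ W p := by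
    intro x
    obtain ⟨p, hp1, hp2⟩ := hDist_max_lemma (fun i => F i x) (fun j => G j x)
      (fun i => hF0 i x) (fun j => hG0 j x) (hFc x) (hGc x)
    refine ⟨p, hp1, ?_⟩
    rw [Set.mem_iInter]
    intro q
    simp only [Set.mem_setOf_eq]
    rintro ⟨hq1, hq2⟩
    exact hp2 q hq1 hq2
  refine ⟨fun s => ⋃ t : {p : P // (p.1 : ℕ) + (p.2 : ℕ) = (s : ℕ)}, W t.val,
    fun s => isOpen_iUnion fun t => hWo _, ?_, ?_⟩
  · intro x
    obtain ⟨p, hp⟩ := hWcov x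
    have hb : (p.1 : ℕ) + (p.2 : ℕ) < n + m + 1 := by
      have := p.1.isLt
      have := p.2.isLt
      omega
    exact ⟨⟨(p.1 : ℕ) + (p.2 : ℕ), hb⟩, Set.mem_iUnion.2 ⟨⟨p, rfl⟩, hp⟩⟩
  · intro s
    exact hDist_homotopic_glue f h _ (fun t => hWo _)
      (fun t t' htt' => hWdisj _ _ (fun he => htt' (Subtype.ext he))
        (t.prop.trans t'.prop.symm))
      (fun t => hWh _)

end Aux

/-- Homotopic distance: least `n` such that `X` has an open cover by `n+1` open sets on each
of which `f` and `g` restrict to homotopic maps; `⊤` if no such cover exists. -/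
noncomputable def hDist {X Y : Type*} [TopologicalSpace X] [TopologicalSpace Y]
    (f g : C(X, Y)) : ℕ∞ :=
  sInf {N : ℕ∞ | ∃ n : ℕ, N = n ∧ ∃ U : Fin (n + 1) → Set X,
    (∀ i, IsOpen (U i)) ∧ (∀ x, ∃ i, x ∈ U i) ∧
    ∀ i, (f.restrict (U i)).Homotopic (g.restrict (U i))}

theorem hDist_triangle {X Y : Type*} [TopologicalSpace X] [TopologicalSpace Y] [NormalSpace X]
    (f g h : C(X, Y)) : hDist f h ≤ hDist f g + hDist g h := by
  classical
  rcases eq_or_ne (hDist f g) ⊤ with h1 | h1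
  · rw [h1, top_add]; exact le_top
  rcases eq_or_ne (hDist g h) ⊤ with h2 | h2
  · rw [h2, add_top]; exact le_top
  have ne1 : {N : ℕ∞ | ∃ n : ℕ, N = n ∧ ∃ U : Fin (n + 1) → Set X,
      (∀ i, IsOpen (U i)) ∧ (∀ x, ∃ i, x ∈ U i) ∧
      ∀ i, (f.restrict (U i)).Homotopic (g.restrict (U i))}.Nonempty := by
    rw [Set.nonempty_iff_ne_empty]
    intro hc
    exact h1 (by rw [hDist, hc, sInf_empty])
  have ne2 : {N : ℕ∞ | ∃ n : ℕ, N = n ∧ ∃ U : Fin (n + 1) → Set X,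
      (∀ i, IsOpen (U i)) ∧ (∀ x, ∃ i, x ∈ U i) ∧
      ∀ i, (g.restrict (U i)).Homotopic (h.restrict (U i))}.Nonempty := by
    rw [Set.nonempty_iff_ne_empty]
    intro hc
    exact h2 (by rw [hDist, hc, sInf_empty])
  obtain ⟨n, hn, U, hUo, hUc, hUh⟩ := csInf_mem ne1
  obtain ⟨m, hm, V, hVo, hVc, hVh⟩ := csInf_mem ne2
  have hn' : hDist f g = (n : ℕ∞) := hn
  have hm' : hDist g h = (m : ℕ∞) := hm
  obtain ⟨Ω, hΩo, hΩc, hΩh⟩ := hDist_core f g h U hUo hUc hUh V hVo hVc hVh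
  have hle : hDist f h ≤ ((n + m : ℕ) : ℕ∞) :=
    sInf_le ⟨n + m, rfl, Ω, hΩo, hΩc, hΩh⟩
  calc hDist f h ≤ ((n + m : ℕ) : ℕ∞) := hle
    _ = (n : ℕ∞) + (m : ℕ∞) := by push_cast; rfl
    _ = hDist f g + hDist g h := by rw [hn', hm']
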